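/- arXiv:1802.03496 — 3 statements merged into one kernel-verified Lean document; each statement's English description precedes it below -/
import Mathlib

section
/- Let ζ_1, ζ_2, ... be i.i.d. standard normal random variables and set M_n := max_{1≤i≤n} ζ_i. Then M_n/√(2 ln n) converges to 1 in probability as n → ∞. -/
open MeasureTheory ProbabilityTheory Real Filter Set Topology
open scoped ENNReal NNReal

section helpers

lemma my_bddAbove {s : Finset ℕ} (f : ℕ → ℝ) :
    BddAbove (Set.range fun j => ⨆ _ : j ∈ s, f j) := by
  apply Set.Finite.bddAbove
  apply Set.Finite.subset ((s.finite_toSet.image f).insert 0)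
  rintro x ⟨j, rfl⟩
  by_cases hj : j ∈ s
  · simp only []
    rw [ciSup_pos (f := fun _ => f j) hj]
    exact Set.mem_insert_of_mem _ ⟨j, hj, rfl⟩
  · haveI : IsEmpty (j ∈ s) := ⟨hj⟩
    simp only []
    rw [Real.iSup_of_isEmpty]
    exact Set.mem_insert _ _

lemma my_le_biSup {s : Finset ℕ} (f : ℕ → ℝ) {i : ℕ} (hi : i ∈ s) :
    f i ≤ ⨆ j ∈ s, f j := by
  calc f i = ⨆ _ : i ∈ s, f i := (ciSup_pos (f := fun _ => f i) hi).symm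
  _ ≤ ⨆ j ∈ s, f j := le_ciSup (my_bddAbove f) i

lemma my_exists_of_le_biSup {s : Finset ℕ} (hs : s.Nonempty) (f : ℕ → ℝ) {t : ℝ}
    (ht : 0 < t) (h : t ≤ ⨆ j ∈ s, f j) : ∃ i ∈ s, t ≤ f i := by
  by_contra hc
  push_neg at hc
  have hlt : (⨆ j ∈ s, f j) < t := by
    have hub : ∀ j, (⨆ _ : j ∈ s, f j) ≤ max 0 (s.sup' hs f) := by
      intro j
      by_cases hj : j ∈ s
      · rw [ciSup_pos (f := fun _ => f j) hj]; exact le_max_of_le_right (Finset.le_sup' f hj)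
      · haveI : IsEmpty (j ∈ s) := ⟨hj⟩
        rw [Real.iSup_of_isEmpty]; exact le_max_left _ _
    refine lt_of_le_of_lt (ciSup_le hub) ?_
    obtain ⟨i, hi, hieq⟩ := Finset.exists_mem_eq_sup' hs f
    exact max_lt ht (hieq ▸ hc i hi)
  exact absurd h (not_le.mpr hlt)

lemma my_pdf_eq (x : ℝ) : gaussianPDFReal 0 1 x = (Real.sqrt (2 * π))⁻¹ * rexp (-x ^ 2 / 2) := by
  simp [gaussianPDFReal]

lemma my_hasDeriv (x : ℝ) :
    HasDerivAt (fun y : ℝ => -rexp (-y ^ 2 / 2)) (x * rexp (-x ^ 2 / 2)) x := by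
  have h1 : HasDerivAt (fun y : ℝ => -y ^ 2 / 2) (-x) x := by
    have := ((hasDerivAt_pow 2 x).neg.div_const 2)
    exact this.congr_deriv (by norm_num; ring)
  have h2 := (h1.exp).neg
  exact h2.congr_deriv (by ring)

lemma my_tendsto_negexp : Tendsto (fun y : ℝ => -rexp (-y ^ 2 / 2)) atTop (𝓝 0) := by
  have h1 : Tendsto (fun y : ℝ => -y ^ 2 / 2) atTop atBot := by
    apply Tendsto.atBot_div_const (by norm_num : (0:ℝ) < 2)
    exact tendsto_neg_atTop_atBot.comp (tendsto_pow_atTop (by norm_num))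
  have := (Real.tendsto_exp_atBot.comp h1).neg
  simpa using this

lemma my_integral_tail {t : ℝ} (ht : 0 ≤ t) :
    ∫ x in Ioi t, x * rexp (-x ^ 2 / 2) = rexp (-t ^ 2 / 2) := by
  have h := integral_Ioi_of_hasDerivAt_of_nonneg' (a := t)
    (g := fun y : ℝ => -rexp (-y ^ 2 / 2)) (g' := fun x => x * rexp (-x ^ 2 / 2))
    (fun x _ => my_hasDeriv x)
    (fun x hx => by
      have hx0 : (0:ℝ) < x := lt_of_le_of_lt ht hx
      positivity)
    my_tendsto_negexp
  rw [h]
  ring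

lemma my_integrableOn_tail {t : ℝ} (ht : 0 ≤ t) :
    IntegrableOn (fun x => x * rexp (-x ^ 2 / 2)) (Ioi t) := by
  apply integrableOn_Ioi_deriv_of_nonneg' (fun x _ => my_hasDeriv x) ?_ my_tendsto_negexp
  intro x hx
  have : (0:ℝ) < x := lt_of_le_of_lt ht hx
  positivity

lemma my_gauss_upper {t : ℝ} (ht : 1 ≤ t) :
    gaussianReal 0 1 (Ici t) ≤ ENNReal.ofReal (rexp (-t ^ 2 / 2)) := by
  rw [gaussianReal_apply_eq_integral 0 one_ne_zero]
  apply ENNReal.ofReal_le_ofReal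
  rw [integral_Ici_eq_integral_Ioi]
  have ht0 : (0:ℝ) ≤ t := le_trans zero_le_one ht
  have hmono : ∫ x in Ioi t, gaussianPDFReal 0 1 x ≤ ∫ x in Ioi t, x * rexp (-x ^ 2 / 2) := by
    apply setIntegral_mono_on ((integrable_gaussianPDFReal 0 1).integrableOn)
      (my_integrableOn_tail ht0) measurableSet_Ioi
    intro x hx
    rw [my_pdf_eq]
    apply mul_le_mul_of_nonneg_right _ (le_of_lt (Real.exp_pos _))
    have h2 : (1:ℝ) ≤ Real.sqrt (2 * π) := by
      rw [Real.one_le_sqrt]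
      nlinarith [Real.pi_gt_three]
    calc (Real.sqrt (2 * π))⁻¹ ≤ 1 := by
          rw [inv_le_one_iff₀]; right; exact h2
    _ ≤ x := le_trans ht (le_of_lt hx)
  calc ∫ x in Ioi t, gaussianPDFReal 0 1 x ≤ ∫ x in Ioi t, x * rexp (-x ^ 2 / 2) := hmono
  _ = rexp (-t ^ 2 / 2) := my_integral_tail ht0

lemma my_gauss_lower {t : ℝ} (ht : 0 ≤ t) :
    ENNReal.ofReal ((Real.sqrt (2 * π))⁻¹ * rexp (-(t + 1) ^ 2 / 2)) ≤ gaussianReal 0 1 (Ioi t) := by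
  refine le_trans ?_ (measure_mono Set.Ioc_subset_Ioi_self (s := Ioc t (t + 1)))
  rw [gaussianReal_apply_eq_integral 0 one_ne_zero]
  apply ENNReal.ofReal_le_ofReal
  have hmeas : MeasurableSet (Ioc t (t + 1)) := measurableSet_Ioc
  have hvol : (volume (Ioc t (t + 1))).toReal = 1 := by
    rw [Real.volume_Ioc]
    simp
  have := setIntegral_ge_of_const_le_real (μ := volume) hmeas (measure_Ioc_lt_top.ne)
    (c := (Real.sqrt (2 * π))⁻¹ * rexp (-(t + 1) ^ 2 / 2)) ?_
    ((integrable_gaussianPDFReal 0 1).integrableOn)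
  · calc (Real.sqrt (2 * π))⁻¹ * rexp (-(t + 1) ^ 2 / 2)
        = (Real.sqrt (2 * π))⁻¹ * rexp (-(t + 1) ^ 2 / 2) * (volume (Ioc t (t + 1))).toReal := by
          rw [hvol, mul_one]
    _ ≤ ∫ x in Ioc t (t + 1), gaussianPDFReal 0 1 x := by
        rw [measureReal_def] at this; exact this
  · intro x hx
    rw [my_pdf_eq]
    apply mul_le_mul_of_nonneg_left _ (by positivity)
    apply Real.exp_le_exp.mpr
    have h1 : t < x := hx.1
    have h2 : x ≤ t + 1 := hx.2
    nlinarith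

lemma my_u_tendsto {ε : ℝ} (hε : 0 < ε) :
    Tendsto (fun n : ℕ => (n:ℝ) * rexp (-((1 + ε) * Real.sqrt (2 * Real.log n)) ^ 2 / 2))
      atTop (𝓝 0) := by
  have hL : Tendsto (fun n : ℕ => Real.log n) atTop atTop :=
    Real.tendsto_log_atTop.comp tendsto_natCast_atTop_atTop
  have hk : (1 - (1 + ε) ^ 2) < 0 := by nlinarith
  have hmain : Tendsto (fun n : ℕ => rexp ((1 - (1 + ε) ^ 2) * Real.log n)) atTop (𝓝 0) :=
    Real.tendsto_exp_atBot.comp (hL.const_mul_atTop_of_neg hk)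
  apply Tendsto.congr' _ hmain
  filter_upwards [eventually_ge_atTop 1] with n hn
  have hn1 : (1:ℝ) ≤ (n:ℝ) := by exact_mod_cast hn
  have hn0 : (0:ℝ) < (n:ℝ) := by linarith
  have hlog : 0 ≤ Real.log n := Real.log_nonneg hn1
  have hsq : (Real.sqrt (2 * Real.log n)) ^ 2 = 2 * Real.log n := Real.sq_sqrt (by linarith)
  have key : rexp ((1 - (1 + ε) ^ 2) * Real.log n)
      = rexp (Real.log n) * rexp (-((1 + ε) ^ 2 * (2 * Real.log n)) / 2) := by
    rw [← Real.exp_add]; congr 1; ring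
  rw [key, Real.exp_log hn0, mul_pow, hsq]

lemma my_np_tendsto {ε : ℝ} (hε : 0 < ε) (hε2 : ε ≤ 2⁻¹) :
    Tendsto (fun n : ℕ => (n:ℝ) *
      ((Real.sqrt (2 * π))⁻¹ * rexp (-((1 - ε) * Real.sqrt (2 * Real.log n) + 1) ^ 2 / 2)))
      atTop atTop := by
  have hδ : 0 < 1 - (1 - ε) ^ 2 := by nlinarith
  have hL : Tendsto (fun n : ℕ => Real.log n) atTop atTop :=
    Real.tendsto_log_atTop.comp tendsto_natCast_atTop_atTop
  have hsqrtpi : 0 < Real.sqrt (2 * π) := Real.sqrt_pos.mpr (by positivity)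
  have hlow : Tendsto (fun n : ℕ => (Real.sqrt (2 * π))⁻¹ *
      rexp ((1 - (1 - ε) ^ 2) / 2 * Real.log n - ((1 - ε) ^ 2 / (1 - (1 - ε) ^ 2) + 2⁻¹)))
      atTop atTop := by
    apply Tendsto.const_mul_atTop (by positivity)
    apply Real.tendsto_exp_atTop.comp
    apply tendsto_atTop_add_const_right
    exact hL.const_mul_atTop (by positivity)
  apply tendsto_atTop_mono' atTop _ hlow
  filter_upwards [eventually_ge_atTop 1] with n hn
  have hn1 : (1:ℝ) ≤ (n:ℝ) := by exact_mod_cast hn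
  have hn0 : (0:ℝ) < (n:ℝ) := by linarith
  have hlog : 0 ≤ Real.log n := Real.log_nonneg hn1
  have hs0 : 0 ≤ Real.sqrt (2 * Real.log n) := Real.sqrt_nonneg _
  have hs2 : (Real.sqrt (2 * Real.log n)) ^ 2 = 2 * Real.log n := Real.sq_sqrt (by linarith)
  have heq : (n:ℝ) * ((Real.sqrt (2 * π))⁻¹ *
        rexp (-((1 - ε) * Real.sqrt (2 * Real.log n) + 1) ^ 2 / 2))
      = (Real.sqrt (2 * π))⁻¹ *
        rexp (Real.log n - ((1 - ε) * Real.sqrt (2 * Real.log n) + 1) ^ 2 / 2) := by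
    rw [Real.exp_sub, Real.exp_log hn0, neg_div, Real.exp_neg]
    field_simp
  rw [heq]
  apply mul_le_mul_of_nonneg_left _ (by positivity)
  apply Real.exp_le_exp.mpr
  have h4 : (1 - ε) * Real.sqrt (2 * Real.log n) ≤
      (1 - (1 - ε) ^ 2) / 4 * (Real.sqrt (2 * Real.log n)) ^ 2 + (1 - ε) ^ 2 / (1 - (1 - ε) ^ 2) := by
    rw [← sub_nonneg]
    have expand : (1 - (1 - ε) ^ 2) / 4 * (Real.sqrt (2 * Real.log n)) ^ 2
        + (1 - ε) ^ 2 / (1 - (1 - ε) ^ 2) - (1 - ε) * Real.sqrt (2 * Real.log n)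
        = ((1 - (1 - ε) ^ 2) * Real.sqrt (2 * Real.log n) - 2 * (1 - ε)) ^ 2
          / (4 * (1 - (1 - ε) ^ 2)) := by
      field_simp
      ring
    rw [expand]
    positivity
  have h5 : (1 - ε) ^ 2 * (Real.sqrt (2 * Real.log n)) ^ 2 = (1 - ε) ^ 2 * (2 * Real.log n) := by
    rw [hs2]
  have h6 : (1 - (1 - ε) ^ 2) / 4 * (Real.sqrt (2 * Real.log n)) ^ 2
      = (1 - (1 - ε) ^ 2) / 2 * Real.log n := by rw [hs2]; ring
  nlinarith [h4, h5, h6]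

end helpers

theorem max_gaussian_ratio_tendsto_one_in_probability
    {Ω : Type*} [MeasurableSpace Ω] (μ : Measure Ω) [IsProbabilityMeasure μ]
    (ζ : ℕ → Ω → ℝ)
    (hmeas : ∀ i, Measurable (ζ i))
    (hindep : iIndepFun ζ μ)
    (hlaw : ∀ i, Measure.map (ζ i) μ = gaussianReal 0 1) :
    TendstoInMeasure μ
      (fun n ω => (⨆ i ∈ Finset.Icc 1 n, ζ i ω) / Real.sqrt (2 * Real.log n))
      atTop (fun _ => (1 : ℝ)) := by
  rw [tendstoInMeasure_iff_dist]
  intro ε₀ hε₀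
  set ε := min ε₀ 2⁻¹ with hεdef
  have hε : 0 < ε := lt_min hε₀ (by norm_num)
  have hε2 : ε ≤ 2⁻¹ := min_le_right _ _
  suffices h : Tendsto (fun n => μ {ω | ε ≤
      dist ((⨆ i ∈ Finset.Icc 1 n, ζ i ω) / Real.sqrt (2 * Real.log n)) 1}) atTop (𝓝 0) by
    refine tendsto_of_tendsto_of_tendsto_of_le_of_le tendsto_const_nhds h
      (fun n => zero_le) (fun n => measure_mono ?_)
    intro ω hω
    simp only [Set.mem_setOf_eq] at hω ⊢
    exact le_trans (min_le_left ε₀ 2⁻¹) hω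
  -- notation
  have hu := my_u_tendsto hε
  have hnp := my_np_tendsto hε hε2
  have hv : Tendsto (fun n : ℕ => rexp (-((n:ℝ) *
      ((Real.sqrt (2 * π))⁻¹ * rexp (-((1 - ε) * Real.sqrt (2 * Real.log n) + 1) ^ 2 / 2)))))
      atTop (𝓝 0) :=
    Real.tendsto_exp_atBot.comp (tendsto_neg_atTop_atBot.comp hnp)
  have hsum := hu.add hv
  rw [add_zero] at hsum
  have hof : Tendsto (fun n : ℕ => ENNReal.ofReal
      ((n:ℝ) * rexp (-((1 + ε) * Real.sqrt (2 * Real.log n)) ^ 2 / 2) +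
       rexp (-((n:ℝ) * ((Real.sqrt (2 * π))⁻¹ *
         rexp (-((1 - ε) * Real.sqrt (2 * Real.log n) + 1) ^ 2 / 2))))))
      atTop (𝓝 0) := by
    have := ENNReal.tendsto_ofReal hsum
    simpa using this
  refine tendsto_of_tendsto_of_tendsto_of_le_of_le' tendsto_const_nhds hof
    (Eventually.of_forall fun n => zero_le) ?_
  filter_upwards [eventually_ge_atTop 2] with n hn
  have hn2 : (2:ℝ) ≤ (n:ℝ) := by exact_mod_cast hn
  have hn1 : (1:ℝ) < (n:ℝ) := by linarith
  have hn0 : (0:ℝ) < (n:ℝ) := by linarith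
  have hlogpos : 0 < Real.log n := Real.log_pos hn1
  have hlog2 : Real.log 2 ≤ Real.log n := Real.log_le_log (by norm_num) hn2
  set c := Real.sqrt (2 * Real.log n) with hcdef
  have hc1 : 1 ≤ c := by
    rw [hcdef, Real.one_le_sqrt]
    nlinarith [Real.log_two_gt_d9]
  have hc0 : 0 < c := lt_of_lt_of_le zero_lt_one hc1
  have htp1 : 1 ≤ (1 + ε) * c := by nlinarith
  have htp0 : 0 < (1 + ε) * c := lt_of_lt_of_le zero_lt_one htp1
  have htm0 : 0 ≤ (1 - ε) * c := by nlinarith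
  have hsne : (Finset.Icc 1 n).Nonempty := by
    rw [Finset.nonempty_Icc]; omega
  -- event inclusion
  have hsub : {ω | ε ≤ dist ((⨆ i ∈ Finset.Icc 1 n, ζ i ω) / c) 1} ⊆
      (⋃ i ∈ Finset.Icc 1 n, ζ i ⁻¹' Ici ((1 + ε) * c)) ∪
      (⋂ i ∈ Finset.Icc 1 n, ζ i ⁻¹' Iic ((1 - ε) * c)) := by
    intro ω hω
    rw [Set.mem_setOf_eq, Real.dist_eq] at hω
    rcases le_abs.mp hω with h | h
    · left
      have hS : (1 + ε) * c ≤ ⨆ i ∈ Finset.Icc 1 n, ζ i ω := by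
        rw [← le_div_iff₀ hc0]
        linarith
      obtain ⟨i, hi, hti⟩ := my_exists_of_le_biSup hsne (fun j => ζ j ω) htp0 hS
      exact Set.mem_biUnion hi hti
    · right
      have hS : (⨆ i ∈ Finset.Icc 1 n, ζ i ω) ≤ (1 - ε) * c := by
        rw [← div_le_iff₀ hc0]
        linarith
      refine Set.mem_biInter fun i hi => ?_
      exact le_trans (my_le_biSup (fun j => ζ j ω) hi) hS
  -- upper bound for the union part
  have hA : μ (⋃ i ∈ Finset.Icc 1 n, ζ i ⁻¹' Ici ((1 + ε) * c)) ≤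
      ENNReal.ofReal ((n:ℝ) * rexp (-((1 + ε) * c) ^ 2 / 2)) := by
    calc μ (⋃ i ∈ Finset.Icc 1 n, ζ i ⁻¹' Ici ((1 + ε) * c))
        ≤ ∑ i ∈ Finset.Icc 1 n, μ (ζ i ⁻¹' Ici ((1 + ε) * c)) :=
          measure_biUnion_finset_le _ _
    _ = ∑ i ∈ Finset.Icc 1 n, gaussianReal 0 1 (Ici ((1 + ε) * c)) := by
          refine Finset.sum_congr rfl fun i _ => ?_
          rw [← hlaw i, Measure.map_apply (hmeas i) measurableSet_Ici]
    _ = (n : ℝ≥0∞) * gaussianReal 0 1 (Ici ((1 + ε) * c)) := by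
          rw [Finset.sum_const, Nat.card_Icc, nsmul_eq_mul]
          norm_num
    _ ≤ (n : ℝ≥0∞) * ENNReal.ofReal (rexp (-((1 + ε) * c) ^ 2 / 2)) :=
          mul_le_mul_right (my_gauss_upper htp1) _
    _ = ENNReal.ofReal ((n:ℝ) * rexp (-((1 + ε) * c) ^ 2 / 2)) := by
          rw [ENNReal.ofReal_mul (by positivity), ENNReal.ofReal_natCast]
  -- upper bound for the intersection part
  have hB : μ (⋂ i ∈ Finset.Icc 1 n, ζ i ⁻¹' Iic ((1 - ε) * c)) ≤
      ENNReal.ofReal (rexp (-((n:ℝ) *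
        ((Real.sqrt (2 * π))⁻¹ * rexp (-((1 - ε) * c + 1) ^ 2 / 2))))) := by
    have hBprod : μ (⋂ i ∈ Finset.Icc 1 n, ζ i ⁻¹' Iic ((1 - ε) * c))
        = ∏ i ∈ Finset.Icc 1 n, μ (ζ i ⁻¹' Iic ((1 - ε) * c)) :=
      hindep.meas_biInter fun i _ => ⟨Iic ((1 - ε) * c), measurableSet_Iic, rfl⟩
    have hmap : ∀ i : ℕ, μ (ζ i ⁻¹' Iic ((1 - ε) * c)) = gaussianReal 0 1 (Iic ((1 - ε) * c)) :=
      fun i => by rw [← hlaw i, Measure.map_apply (hmeas i) measurableSet_Iic]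
    have hGne : gaussianReal 0 1 (Iic ((1 - ε) * c)) ≠ ⊤ := measure_ne_top _ _
    set p := (Real.sqrt (2 * π))⁻¹ * rexp (-((1 - ε) * c + 1) ^ 2 / 2) with hpdef
    have hp0 : 0 ≤ p := by positivity
    have hple : p ≤ (gaussianReal 0 1 (Ioi ((1 - ε) * c))).toReal := by
      have h1 := my_gauss_lower htm0
      have h2 := ENNReal.toReal_mono (measure_ne_top _ _) h1
      rwa [ENNReal.toReal_ofReal hp0] at h2
    have hsum1 : (gaussianReal 0 1 (Iic ((1 - ε) * c))).toReal +
        (gaussianReal 0 1 (Ioi ((1 - ε) * c))).toReal = 1 := by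
      have h2 := measure_add_measure_compl (μ := gaussianReal 0 1)
        (measurableSet_Iic (a := (1 - ε) * c))
      rw [Set.compl_Iic, measure_univ] at h2
      have h3 := congrArg ENNReal.toReal h2
      rwa [ENNReal.toReal_add hGne (measure_ne_top _ _), ENNReal.toReal_one] at h3
    have hq : (gaussianReal 0 1 (Iic ((1 - ε) * c))).toReal ≤ rexp (-p) := by
      have h4 := Real.add_one_le_exp (-p)
      linarith
    calc μ (⋂ i ∈ Finset.Icc 1 n, ζ i ⁻¹' Iic ((1 - ε) * c))
        = gaussianReal 0 1 (Iic ((1 - ε) * c)) ^ n := by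
          rw [hBprod, Finset.prod_congr rfl fun i _ => hmap i, Finset.prod_const, Nat.card_Icc]
          norm_num
    _ = ENNReal.ofReal ((gaussianReal 0 1 (Iic ((1 - ε) * c))).toReal) ^ n := by
          rw [ENNReal.ofReal_toReal hGne]
    _ = ENNReal.ofReal ((gaussianReal 0 1 (Iic ((1 - ε) * c))).toReal ^ n) :=
          (ENNReal.ofReal_pow ENNReal.toReal_nonneg n).symm
    _ ≤ ENNReal.ofReal (rexp (-p) ^ n) :=
          ENNReal.ofReal_le_ofReal (pow_le_pow_left₀ ENNReal.toReal_nonneg hq n)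
    _ = ENNReal.ofReal (rexp (-((n:ℝ) * p))) := by
          rw [← Real.exp_nat_mul]
          congr 1
          ring_nf
  calc μ {ω | ε ≤ dist ((⨆ i ∈ Finset.Icc 1 n, ζ i ω) / c) 1}
      ≤ μ ((⋃ i ∈ Finset.Icc 1 n, ζ i ⁻¹' Ici ((1 + ε) * c)) ∪
          (⋂ i ∈ Finset.Icc 1 n, ζ i ⁻¹' Iic ((1 - ε) * c))) := measure_mono hsub
  _ ≤ μ (⋃ i ∈ Finset.Icc 1 n, ζ i ⁻¹' Ici ((1 + ε) * c)) +
      μ (⋂ i ∈ Finset.Icc 1 n, ζ i ⁻¹' Iic ((1 - ε) * c)) := measure_union_le _ _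
  _ ≤ ENNReal.ofReal ((n:ℝ) * rexp (-((1 + ε) * c) ^ 2 / 2)) +
      ENNReal.ofReal (rexp (-((n:ℝ) *
        ((Real.sqrt (2 * π))⁻¹ * rexp (-((1 - ε) * c + 1) ^ 2 / 2))))) := add_le_add hA hB
  _ = ENNReal.ofReal ((n:ℝ) * rexp (-((1 + ε) * c) ^ 2 / 2) +
      rexp (-((n:ℝ) * ((Real.sqrt (2 * π))⁻¹ * rexp (-((1 - ε) * c + 1) ^ 2 / 2))))) :=
        (ENNReal.ofReal_add (by positivity) (by positivity)).symm
end

section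
/- Suppose X and Y are real random variables (possibly on different probability spaces) such that X has a continuous (atomless) distribution and X ≥ Y in stochastic order (i.e., P(X ≤ x) ≤ P(Y ≤ x) for all x), and Z is a random variable defined on the same probability space as X. Then there exist random variables Y', Z' defined on one common probability space such that Y' has the same distribution as Y, Z' has the same distribution as Z, and X + Z ≥ Y' + Z' in stochastic order. -/
open MeasureTheory Set Filter ProbabilityTheory
open scoped Topology

lemma cdf_level_set_measure (ν : Measure ℝ) [IsProbabilityMeasure ν]
    (hcont : Continuous (cdf ν)) {c : ℝ} (hc0 : 0 ≤ c) (hc1 : c ≤ 1) :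
    ν {t | cdf ν t ≤ c} = ENNReal.ofReal c := by
  rcases eq_or_lt_of_le hc1 with hc1 | hc1
  · have h : {t : ℝ | cdf ν t ≤ c} = univ :=
      eq_univ_of_forall fun t => hc1 ▸ cdf_le_one ν t
    rw [h, measure_univ, hc1, ENNReal.ofReal_one]
  by_cases hex : ∃ x₀, cdf ν x₀ = c
  · obtain ⟨x₀, hx₀⟩ := hex
    apply le_antisymm
    · set s := {t : ℝ | cdf ν t ≤ c} with hs
      by_cases hb : BddAbove s
      · have hsne : s.Nonempty := ⟨x₀, hx₀.le⟩
        have hscl : IsClosed s := isClosed_Iic.preimage hcont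
        have hmem : sSup s ∈ s := hscl.csSup_mem hsne hb
        calc ν s ≤ ν (Iic (sSup s)) := measure_mono fun t ht => le_csSup hb ht
          _ = ENNReal.ofReal (cdf ν (sSup s)) := (ofReal_cdf ν _).symm
          _ ≤ ENNReal.ofReal c := ENNReal.ofReal_le_ofReal hmem
      · exfalso
        obtain hb' := not_bddAbove_iff.mp hb
        have hle : ∀ t, cdf ν t ≤ c := fun t => by
          obtain ⟨y, hy, hty⟩ := hb' t
          exact le_trans (monotone_cdf ν hty.le) hy
        have := le_of_tendsto (tendsto_cdf_atTop ν) (Eventually.of_forall hle)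
        linarith
    · calc ENNReal.ofReal c = ν (Iic x₀) := by rw [← hx₀, ofReal_cdf]
        _ ≤ ν {t | cdf ν t ≤ c} :=
          measure_mono fun t (ht : t ≤ x₀) => le_trans (monotone_cdf ν ht) hx₀.le
  · have hc0' : c = 0 := by
      by_contra h
      have hc0'' : 0 < c := lt_of_le_of_ne hc0 (Ne.symm h)
      obtain ⟨a, ha⟩ := ((tendsto_cdf_atBot ν).eventually_lt_const hc0'').exists
      obtain ⟨b, hb⟩ := ((tendsto_cdf_atTop ν).eventually_const_lt hc1).exists
      have hab : a ≤ b := by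
        by_contra hab
        exact absurd (monotone_cdf ν (le_of_not_ge hab)) (not_le.mpr (lt_trans ha hb))
      obtain ⟨x₀, _, hx₀⟩ := intermediate_value_Icc hab hcont.continuousOn ⟨ha.le, hb.le⟩
      exact hex ⟨x₀, hx₀⟩
    subst hc0'
    have h : {t : ℝ | cdf ν t ≤ 0} = ∅ := by
      ext t
      simp only [mem_setOf_eq, mem_empty_iff_false, iff_false, not_le]
      exact lt_of_le_of_ne (cdf_nonneg ν t) fun h => hex ⟨t, h.symm⟩
    rw [h, measure_empty, ENNReal.ofReal_zero]

lemma cdf_continuous_of_atomless (ν : Measure ℝ) [IsProbabilityMeasure ν]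
    (h : ∀ x : ℝ, ν {x} = 0) : Continuous (cdf ν) := by
  rw [continuous_iff_continuousAt]
  intro x
  rw [(monotone_cdf ν).continuousAt_iff_leftLim_eq_rightLim, (cdf ν).rightLim_eq]
  have hsing := (cdf ν).measure_singleton x
  rw [measure_cdf ν, h x] at hsing
  have h1 : cdf ν x - Function.leftLim (cdf ν) x ≤ 0 := by
    rw [← ENNReal.ofReal_eq_zero]
    exact hsing.symm
  have h2 : Function.leftLim (cdf ν) x ≤ cdf ν x := (monotone_cdf ν).leftLim_le le_rfl
  linarith

theorem stochastic_order_add_lemma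
    {Ω Ω' : Type*} [MeasurableSpace Ω] [MeasurableSpace Ω']
    (μ : Measure Ω) [IsProbabilityMeasure μ]
    (μ' : Measure Ω') [IsProbabilityMeasure μ']
    (X Z : Ω → ℝ) (Y : Ω' → ℝ)
    (hX : Measurable X) (hZ : Measurable Z) (hY : Measurable Y)
    (hcont : ∀ x : ℝ, μ (X ⁻¹' {x}) = 0)
    (hst : ∀ x : ℝ, μ {ω | X ω ≤ x} ≤ μ' {ω | Y ω ≤ x}) :
    ∃ (Ω'' : Type) (_ : MeasurableSpace Ω'') (μ'' : Measure Ω'')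
      (_ : IsProbabilityMeasure μ'') (Y' Z' : Ω'' → ℝ),
      Measurable Y' ∧ Measurable Z' ∧
      Measure.map Y' μ'' = Measure.map Y μ' ∧
      Measure.map Z' μ'' = Measure.map Z μ ∧
      ∀ x : ℝ, μ {ω | X ω + Z ω ≤ x} ≤ μ'' {ω | Y' ω + Z' ω ≤ x} := by
  set ν := Measure.map X μ with hν
  set ρ := Measure.map Y μ' with hρ
  haveI : IsProbabilityMeasure ν := Measure.isProbabilityMeasure_map hX.aemeasurable
  haveI : IsProbabilityMeasure ρ := Measure.isProbabilityMeasure_map hY.aemeasurable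
  have hνIic : ∀ t : ℝ, ν (Iic t) = μ {ω | X ω ≤ t} := fun t => by
    rw [hν, Measure.map_apply hX measurableSet_Iic]; rfl
  have hρIic : ∀ t : ℝ, ρ (Iic t) = μ' {ω | Y ω ≤ t} := fun t => by
    rw [hρ, Measure.map_apply hY measurableSet_Iic]; rfl
  -- cdf comparison
  have hFH : ∀ t : ℝ, cdf ν t ≤ cdf ρ t := by
    intro t
    rw [cdf_eq_real, cdf_eq_real, measureReal_def, measureReal_def, hνIic, hρIic]
    exact ENNReal.toReal_mono (measure_ne_top _ _) (hst t)
  have hHmono : Monotone (cdf ρ) := monotone_cdf ρ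
  have hFcont : Continuous (cdf ν) := by
    apply cdf_continuous_of_atomless
    intro x
    rw [hν, Measure.map_apply hX (measurableSet_singleton x)]
    exact hcont x
  -- generalized inverse
  set g : ℝ → ℝ := fun t => sInf {y | cdf ν t ≤ cdf ρ y} with hg
  have hne : ∀ t : ℝ, {y | cdf ν t ≤ cdf ρ y}.Nonempty := fun t => ⟨t, hFH t⟩
  have hbdd : ∀ t : ℝ, 0 < cdf ν t → BddBelow {y | cdf ν t ≤ cdf ρ y} := by
    intro t ht
    obtain ⟨y₀, hy₀⟩ := eventually_atBot.mp ((tendsto_cdf_atBot ρ).eventually_lt_const ht)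
    refine ⟨y₀, fun y hy => ?_⟩
    by_contra hyy
    exact absurd hy (not_le.mpr (hy₀ y (le_of_not_ge hyy)))
  have hg_mem : ∀ t : ℝ, 0 < cdf ν t → cdf ν t ≤ cdf ρ (g t) := by
    intro t ht
    have htend : Tendsto (cdf ρ) (𝓝[>] (g t)) (𝓝 (cdf ρ (g t))) :=
      ((cdf ρ).right_continuous (g t)).mono Ioi_subset_Ici_self
    refine ge_of_tendsto htend ?_
    filter_upwards [self_mem_nhdsWithin] with y hy
    obtain ⟨z, hz, hzy⟩ := exists_lt_of_csInf_lt (hne t) hy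
    exact le_trans hz (hHmono hzy.le)
  have hg_iff : ∀ t y : ℝ, 0 < cdf ν t → (g t ≤ y ↔ cdf ν t ≤ cdf ρ y) := by
    intro t y ht
    constructor
    · intro hle
      exact le_trans (hg_mem t ht) (hHmono hle)
    · intro hle
      exact csInf_le (hbdd t ht) hle
  have hg_le : ∀ t : ℝ, 0 < cdf ν t → g t ≤ t := fun t ht => csInf_le (hbdd t ht) (hFH t)
  -- degenerate value of g when cdf ν t = 0
  have hg_zero : ∀ t : ℝ, cdf ν t = 0 → g t = 0 := by
    intro t ht
    have : {y | cdf ν t ≤ cdf ρ y} = univ :=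
      eq_univ_of_forall fun y => ht ▸ cdf_nonneg ρ y
    rw [hg]; simp only [this]
    have hnb : ¬ BddBelow (univ : Set ℝ) := by
      rintro ⟨b, hb⟩
      have := hb (mem_univ (b - 1))
      linarith
    exact Real.sInf_of_not_bddBelow hnb
  -- measurability of g
  have hgmeas : Measurable g := by
    apply measurable_of_Iic
    intro c
    have h : g ⁻¹' Iic c =
        {t | cdf ν t ≤ cdf ρ c} ∩ ({t | 0 < cdf ν t} ∪ {_t : ℝ | (0:ℝ) ≤ c}) := by
      ext t
      simp only [mem_preimage, mem_Iic, mem_inter_iff, mem_union, mem_setOf_eq]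
      rcases (cdf_nonneg ν t).eq_or_lt with h0 | h0
      · rw [hg_zero t h0.symm]
        constructor
        · intro h; exact ⟨h0.symm ▸ cdf_nonneg ρ c, Or.inr h⟩
        · rintro ⟨-, (h | h)⟩
          · exact absurd h0.symm (ne_of_gt h)
          · exact h
      · constructor
        · intro h; exact ⟨(hg_iff t c h0).mp h, Or.inl h0⟩
        · rintro ⟨h, -⟩; exact (hg_iff t c h0).mpr h
    rw [h]
    exact ((hFcont.measurable (measurableSet_Iic (a := cdf ρ c)))).inter
      (((hFcont.measurable measurableSet_Ioi)).union (MeasurableSet.const _))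
  -- the set where cdf ν vanishes is null
  have hzero_null : ν {t | cdf ν t = 0} = 0 := by
    have h0 : ν {t | cdf ν t ≤ 0} = 0 := by
      rw [cdf_level_set_measure ν hFcont le_rfl zero_le_one, ENNReal.ofReal_zero]
    exact measure_mono_null (fun t ht => le_of_eq ht) h0
  have hμzero : μ {ω | cdf ν (X ω) = 0} = 0 := by
    have hms : MeasurableSet {t : ℝ | cdf ν t = 0} :=
      hFcont.measurable (measurableSet_singleton 0)
    have : {ω | cdf ν (X ω) = 0} = X ⁻¹' {t | cdf ν t = 0} := rfl
    rw [this, ← Measure.map_apply hX hms, ← hν]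
    exact hzero_null
  -- construct the space
  have hpair : Measurable (fun ω => (g (X ω), Z ω)) := (hgmeas.comp hX).prodMk hZ
  refine ⟨ℝ × ℝ, inferInstance, Measure.map (fun ω => (g (X ω), Z ω)) μ,
    Measure.isProbabilityMeasure_map hpair.aemeasurable, Prod.fst, Prod.snd,
    measurable_fst, measurable_snd, ?_, ?_, ?_⟩
  · -- distribution of Y'
    rw [Measure.map_map measurable_fst hpair]
    have hcomp : (Prod.fst ∘ fun ω => (g (X ω), Z ω)) = fun ω => g (X ω) := rfl
    rw [hcomp]
    haveI : IsProbabilityMeasure (Measure.map (fun ω => g (X ω)) μ) :=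
      Measure.isProbabilityMeasure_map (hgmeas.comp hX).aemeasurable
    refine Measure.ext_of_Iic _ _ fun y => ?_
    have hIicg : MeasurableSet (g ⁻¹' Iic y) := hgmeas measurableSet_Iic
    have hgX : Measurable fun ω => g (X ω) := hgmeas.comp hX
    have hL : (Measure.map (fun ω => g (X ω)) μ) (Iic y) = ν (g ⁻¹' Iic y) := by
      rw [Measure.map_apply hgX measurableSet_Iic, hν, Measure.map_apply hX hIicg]
      rfl
    have hae : g ⁻¹' Iic y =ᵐ[ν] {t | cdf ν t ≤ cdf ρ y} := by
      have hpos : ∀ᵐ t ∂ν, 0 < cdf ν t := by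
        rw [ae_iff]
        refine measure_mono_null (fun t ht => ?_) hzero_null
        simp only [mem_setOf_eq, not_lt] at ht ⊢
        exact le_antisymm ht (cdf_nonneg ν t)
      filter_upwards [hpos] with t ht
      simp only [eq_iff_iff, mem_preimage, mem_Iic, mem_setOf_eq]
      exact hg_iff t y ht
    rw [hL, measure_congr hae,
      cdf_level_set_measure ν hFcont (cdf_nonneg ρ y) (cdf_le_one ρ y)]
    exact ofReal_cdf ρ y
  · -- distribution of Z'
    rw [Measure.map_map measurable_snd hpair]
    rfl
  · -- stochastic order
    intro x
    have hset : MeasurableSet {p : ℝ × ℝ | p.1 + p.2 ≤ x} :=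
      measurableSet_le (measurable_fst.add measurable_snd) measurable_const
    rw [Measure.map_apply hpair hset]
    have hsub : {ω | X ω + Z ω ≤ x} ⊆
        ((fun ω => (g (X ω), Z ω)) ⁻¹' {p : ℝ × ℝ | p.1 + p.2 ≤ x}) ∪
        {ω | cdf ν (X ω) = 0} := by
      intro ω hω
      rcases (cdf_nonneg ν (X ω)).eq_or_lt with h0 | h0
      · exact Or.inr h0.symm
      · refine Or.inl ?_
        simp only [mem_preimage, mem_setOf_eq]
        calc g (X ω) + Z ω ≤ X ω + Z ω := add_le_add_left (hg_le _ h0) _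
          _ ≤ x := hω
    calc μ {ω | X ω + Z ω ≤ x}
        ≤ μ (((fun ω => (g (X ω), Z ω)) ⁻¹' {p : ℝ × ℝ | p.1 + p.2 ≤ x}) ∪
            {ω | cdf ν (X ω) = 0}) := measure_mono hsub
      _ ≤ μ ((fun ω => (g (X ω), Z ω)) ⁻¹' {p : ℝ × ℝ | p.1 + p.2 ≤ x}) +
            μ {ω | cdf ν (X ω) = 0} := measure_union_le _ _
      _ = μ ((fun ω => (g (X ω), Z ω)) ⁻¹' {p : ℝ × ℝ | p.1 + p.2 ≤ x}) := by
            rw [hμzero, add_zero]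
end

section
/- Let (X_n), (Y_n), (Z_n) be sequences of real random variables with X_n ≥ Y_n in stochastic order for each n, X_n having continuous distributions, Z_n defined on the same space as X_n, and Z_n → 0 in probability. Then there exist random variables Y'_n with Y'_n distributed as Y_n and random variables R_n → 0 in probability (on a common space with Y'_n) such that X_n + Z_n ≥ Y'_n + R_n in stochastic order for every n. -/
open MeasureTheory Filter Set

/-- generalized inverse (quantile) of a monotone function is measurable -/
lemma measurable_qsInf (g : ℝ → ℝ) :
    Measurable fun u => sInf {y | u ≤ g y} := by
  set S : ℝ → Set ℝ := fun u => {y | u ≤ g y} with hS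
  have hanti : ∀ {u v : ℝ}, u ≤ v → S v ⊆ S u := by
    intro u v huv y hy; exact le_trans huv hy
  set P : Set ℝ := {u | (S u).Nonempty ∧ BddBelow (S u)} with hP
  have hPo : P.OrdConnected := by
    constructor
    intro u1 h1 u2 h2 u hu
    exact ⟨h2.1.mono (hanti hu.2), h1.2.mono (hanti hu.1)⟩
  have hQ0 : ∀ u, u ∉ P → sInf (S u) = 0 := by
    intro u hu
    by_cases hne : (S u).Nonempty
    · have : ¬BddBelow (S u) := fun hb => hu ⟨hne, hb⟩
      exact Real.sInf_of_not_bddBelow this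
    · rw [not_nonempty_iff_eq_empty.mp hne]; exact Real.sInf_empty
  apply measurable_of_Iic
  intro c
  have hdecomp : (fun u => sInf (S u)) ⁻¹' Iic c
      = {u | u ∈ P ∧ sInf (S u) ≤ c} ∪ (Pᶜ ∩ {u | (0:ℝ) ≤ c}) := by
    ext u
    simp only [mem_preimage, mem_Iic, mem_union, mem_setOf_eq, mem_inter_iff, mem_compl_iff]
    by_cases hu : u ∈ P
    · simp [hu]
    · simp [hu, hQ0 u hu]
  rw [hdecomp]
  have h1 : ({u | u ∈ P ∧ sInf (S u) ≤ c} : Set ℝ).OrdConnected := by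
    constructor
    intro u1 h1 u2 h2 u hu
    have hup : u ∈ P := hPo.out h1.1 h2.1 hu
    refine ⟨hup, le_trans ?_ h2.2⟩
    exact csInf_le_csInf hup.2 h2.1.1 (hanti hu.2)
  apply MeasurableSet.union h1.measurableSet
  apply MeasurableSet.inter hPo.measurableSet.compl
  by_cases h : (0:ℝ) ≤ c
  · simp [h]
  · simp [h]

noncomputable def qF (ρ : Measure ℝ) : ℝ → ℝ := fun u => sInf {y | u ≤ (ρ (Iic y)).toReal}

lemma cdf_mono (ρ : Measure ℝ) [IsFiniteMeasure ρ] : Monotone fun y => (ρ (Iic y)).toReal := by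
  intro a b hab
  exact ENNReal.toReal_mono (measure_ne_top ρ _) (measure_mono (Iic_subset_Iic.mpr hab))

lemma measurable_qF (ρ : Measure ℝ) [IsFiniteMeasure ρ] : Measurable (qF ρ) :=
  measurable_qsInf _ 

lemma qF_nonempty (ρ : Measure ℝ) [IsFiniteMeasure ρ] {u : ℝ}
    (hm : u < (ρ univ).toReal) : {y | u ≤ (ρ (Iic y)).toReal}.Nonempty := by
  rcases le_or_gt u 0 with hu | hu
  · exact ⟨0, le_trans hu ENNReal.toReal_nonneg⟩
  have h1 : Tendsto (fun y : ℝ => ρ (Iic y)) atTop (nhds (ρ univ)) :=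
    tendsto_measure_Iic_atTop ρ
  have h2 : ENNReal.ofReal u < ρ univ :=
    (ENNReal.ofReal_lt_iff_lt_toReal hu.le (measure_ne_top ρ _)).mpr hm
  rcases (h1.eventually_const_lt h2).exists with ⟨y, hy⟩
  exact ⟨y, (ENNReal.ofReal_le_iff_le_toReal (measure_ne_top ρ (Iic y))).mp hy.le⟩

lemma qF_bddBelow (ρ : Measure ℝ) [IsFiniteMeasure ρ] {u : ℝ} (h0 : 0 < u) :
    BddBelow {y | u ≤ (ρ (Iic y)).toReal} := by
  have h1 : Tendsto (fun n : ℕ => ρ (Iic (-(n:ℝ)))) atTop (nhds (ρ (⋂ n : ℕ, Iic (-(n:ℝ))))) := by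
    refine tendsto_measure_iInter_atTop (fun n => nullMeasurableSet_Iic) ?_ ⟨0, measure_ne_top _ _⟩
    intro a b hab
    exact Iic_subset_Iic.mpr (by push_cast; linarith [(Nat.cast_le (α := ℝ)).mpr hab])
  have hempty : (⋂ n : ℕ, Iic (-(n:ℝ))) = ∅ := by
    ext z; simp only [mem_iInter, mem_Iic, mem_empty_iff_false, iff_false, not_forall]
    rcases exists_nat_gt (-z) with ⟨n, hn⟩
    exact ⟨n, by push_cast; linarith⟩
  rw [hempty, measure_empty] at h1
  have h2 : ∀ᶠ n : ℕ in atTop, ρ (Iic (-(n:ℝ))) < ENNReal.ofReal u :=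
    h1.eventually_lt_const (by simp [ENNReal.ofReal_pos, h0])
  rcases h2.exists with ⟨n, hn⟩
  refine ⟨-(n:ℝ), fun y hy => ?_⟩
  by_contra hlt
  push_neg at hlt
  have : (ρ (Iic y)).toReal < u := by
    have := lt_of_le_of_lt (measure_mono (Iic_subset_Iic.mpr hlt.le)) hn
    have h3 := ENNReal.toReal_lt_of_lt_ofReal this
    exact h3
  exact absurd hy (not_le.mpr this)

lemma qF_le_iff (ρ : Measure ℝ) [IsFiniteMeasure ρ] {u y : ℝ}
    (h0 : 0 < u) (hm : u < (ρ univ).toReal) :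
    qF ρ u ≤ y ↔ u ≤ (ρ (Iic y)).toReal := by
  constructor
  · intro h
    have hstep : ∀ m : ℕ, u ≤ (ρ (Iic (y + ((m:ℝ)+1)⁻¹))).toReal := by
      intro m
      have hpos : (0:ℝ) < ((m:ℝ)+1)⁻¹ := by positivity
      have hlt : qF ρ u < y + ((m:ℝ)+1)⁻¹ := lt_of_le_of_lt h (by linarith)
      rcases (csInf_lt_iff (qF_bddBelow ρ h0) (qF_nonempty ρ hm)).mp hlt with ⟨s, hs, hsy⟩
      exact le_trans hs (cdf_mono ρ hsy.le)
    have h1 : Tendsto (fun m : ℕ => ρ (Iic (y + ((m:ℝ)+1)⁻¹))) atTop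
        (nhds (ρ (⋂ m : ℕ, Iic (y + ((m:ℝ)+1)⁻¹)))) := by
      refine tendsto_measure_iInter_atTop (fun n => nullMeasurableSet_Iic) ?_ ⟨0, measure_ne_top _ _⟩
      intro a b hab
      refine Iic_subset_Iic.mpr (by
        have : ((b:ℝ)+1)⁻¹ ≤ ((a:ℝ)+1)⁻¹ := by
          apply inv_anti₀ (by positivity)
          push_cast; linarith [(Nat.cast_le (α := ℝ)).mpr hab]
        linarith)
    have hInt : (⋂ m : ℕ, Iic (y + ((m:ℝ)+1)⁻¹)) = Iic y := by
      ext z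
      simp only [mem_iInter, mem_Iic]
      constructor
      · intro hz
        by_contra hzy
        push_neg at hzy
        rcases exists_nat_one_div_lt (sub_pos.mpr hzy) with ⟨m, hmm⟩
        have := hz m
        rw [one_div] at hmm
        linarith
      · intro hz m; have : (0:ℝ) < ((m:ℝ)+1)⁻¹ := by positivity
        linarith
    rw [hInt] at h1
    have h2 : ENNReal.ofReal u ≤ ρ (Iic y) := by
      refine ge_of_tendsto h1 (Eventually.of_forall fun m => ?_)
      exact (ENNReal.ofReal_le_iff_le_toReal (measure_ne_top _ _)).mpr (hstep m)
    exact (ENNReal.ofReal_le_iff_le_toReal (measure_ne_top _ _)).mp h2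
  · intro h
    exact csInf_le (qF_bddBelow ρ h0) h

lemma le_qF (ρ : Measure ℝ) [IsFiniteMeasure ρ] {u b : ℝ}
    (hm : u < (ρ univ).toReal)
    (hb : ∀ y, u ≤ (ρ (Iic y)).toReal → b ≤ y) : b ≤ qF ρ u :=
  le_csInf (qF_nonempty ρ hm) hb


lemma vol_qF (ρ : Measure ℝ) [IsFiniteMeasure ρ] (y c : ℝ)
    (hcm : c ≤ (ρ univ).toReal) :
    volume (Ioo 0 c ∩ {u | qF ρ u ≤ y}) = ENNReal.ofReal (min (ρ (Iic y)).toReal c) := by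
  rcases le_or_gt c 0 with hc | hc
  · rw [Ioo_eq_empty (by linarith), empty_inter, measure_empty]
    have : min (ρ (Iic y)).toReal c ≤ 0 := le_trans (min_le_right _ _) hc
    rw [ENNReal.ofReal_of_nonpos this]
  · have hset : Ioo 0 c ∩ {u | qF ρ u ≤ y} = Ioo 0 c ∩ Iic ((ρ (Iic y)).toReal) := by
      ext u
      simp only [mem_inter_iff, mem_Ioo, mem_setOf_eq, mem_Iic, and_congr_right_iff]
      intro hu
      exact qF_le_iff ρ hu.1 (lt_of_lt_of_le hu.2 hcm)
    rw [hset]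
    set F := (ρ (Iic y)).toReal with hF
    have hF0 : 0 ≤ F := ENNReal.toReal_nonneg
    rcases le_or_gt c F with h | h
    · rw [min_eq_right h]
      have : Ioo 0 c ∩ Iic F = Ioo 0 c := by
        apply inter_eq_self_of_subset_left
        intro u hu; exact le_trans (le_of_lt hu.2) h
      rw [this, Real.volume_Ioo, sub_zero]
    · rw [min_eq_left h.le]
      have : Ioo 0 c ∩ Iic F = Ioc 0 F := by
        ext u; simp only [mem_inter_iff, mem_Ioo, mem_Iic, mem_Ioc]
        constructor
        · rintro ⟨⟨h1, _⟩, h3⟩; exact ⟨h1, h3⟩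
        · rintro ⟨h1, h2⟩; exact ⟨⟨h1, lt_of_le_of_lt h2 h⟩, h2⟩
      rw [this, Real.volume_Ioc, sub_zero]

lemma exists_eps {Ω : Type*} [MeasurableSpace Ω] (μ : Measure Ω) (Z : ℕ → Ω → ℝ)
    (hZ0 : TendstoInMeasure μ Z atTop (fun _ => (0 : ℝ))) :
    ∃ ε : ℕ → ℝ, (∀ n, 0 < ε n) ∧ Tendsto ε atTop (nhds 0) ∧
      Tendsto (fun n => μ {ω | ε n ≤ |Z n ω|}) atTop (nhds 0) := by
  have key : ∀ k : ℕ, ∃ N : ℕ, ∀ n, N ≤ n →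
      μ {ω | ((k:ℝ)+1)⁻¹ ≤ |Z n ω|} < ENNReal.ofReal (((k:ℝ)+1)⁻¹) := by
    intro k
    have hpos : (0:ℝ) < ((k:ℝ)+1)⁻¹ := by positivity
    have h := tendstoInMeasure_iff_dist.mp hZ0 _ hpos
    have h2 : ∀ᶠ n in atTop, μ {ω | ((k:ℝ)+1)⁻¹ ≤ dist (Z n ω) 0} < ENNReal.ofReal (((k:ℝ)+1)⁻¹) :=
      h.eventually_lt_const (by simp [ENNReal.ofReal_pos, hpos])
    simp only [Real.dist_0_eq_abs] at h2
    rcases eventually_atTop.mp h2 with ⟨N, hN⟩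
    exact ⟨N, hN⟩
  choose N hN using key
  -- monotone envelope
  let M : ℕ → ℕ := fun k => Nat.rec (N 0) (fun k ih => max (N (k+1)) (ih + 1)) k
  have hM0 : M 0 = N 0 := rfl
  have hMs : ∀ k, M (k+1) = max (N (k+1)) (M k + 1) := fun k => rfl
  have hMmono : StrictMono M := strictMono_nat_of_lt_succ (fun k => by
    rw [hMs k]; exact lt_of_lt_of_le (Nat.lt_succ_self _) (le_max_right _ _))
  have hMN : ∀ k, N k ≤ M k := by
    intro k; cases k with
    | zero => exact le_of_eq hM0.symm
    | succ k => rw [hMs k]; exact le_max_left _ _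
  have hMk : ∀ k, k ≤ M k := fun k => hMmono.le_apply
  set K : ℕ → ℕ := fun n => sSup {k | M k ≤ n} with hK
  have hKbdd : ∀ n, BddAbove {k | M k ≤ n} := by
    intro n
    exact BddAbove.mono (fun k hk => le_trans (hMk k) hk) (bddAbove_Iic (a := n))
  have hKspec : ∀ n, M 0 ≤ n → M (K n) ≤ n := by
    intro n hn
    have hne : {k | M k ≤ n}.Nonempty := ⟨0, hn⟩
    exact Nat.sSup_mem hne (hKbdd n)
  have hKge : ∀ k n, M k ≤ n → k ≤ K n := by
    intro k n hkn
    exact le_csSup (hKbdd n) hkn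
  have hKtop : Tendsto K atTop atTop :=
    tendsto_atTop.mpr (fun k => eventually_atTop.mpr ⟨M k, fun n hn => hKge k n hn⟩)
  have h1 : Tendsto (fun n => ((K n : ℝ)+1)) atTop atTop :=
    tendsto_atTop_add_const_right _ 1 (tendsto_natCast_atTop_atTop.comp hKtop)
  refine ⟨fun n => ((K n : ℝ)+1)⁻¹, fun n => by positivity, h1.inv_tendsto_atTop, ?_⟩
  · have hupper : ∀ᶠ n in atTop, μ {ω | ((K n:ℝ)+1)⁻¹ ≤ |Z n ω|}
        ≤ ENNReal.ofReal (((K n:ℝ)+1)⁻¹) := by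
      filter_upwards [eventually_ge_atTop (M 0)] with n hn
      exact (hN (K n) n (le_trans (hMN (K n)) (hKspec n hn))).le
    have hof : Tendsto (fun n => ENNReal.ofReal (((K n:ℝ)+1)⁻¹)) atTop (nhds 0) := by
      have h1 : Tendsto (fun n => ((K n : ℝ)+1)) atTop atTop :=
        tendsto_atTop_add_const_right _ 1 (tendsto_natCast_atTop_atTop.comp hKtop)
      have := ENNReal.tendsto_ofReal (h1.inv_tendsto_atTop)
      simpa using this
    exact tendsto_of_tendsto_of_tendsto_of_le_of_le' tendsto_const_nhds hof
      (Eventually.of_forall (fun n => zero_le)) hupper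



lemma cdf_le_mass (ρ : Measure ℝ) [IsFiniteMeasure ρ] (y : ℝ) :
    (ρ (Iic y)).toReal ≤ (ρ univ).toReal :=
  ENNReal.toReal_mono (measure_ne_top ρ _) (measure_mono (subset_univ _))

theorem stochastic_order_add_oP_corollary
    {Ω Ω' : Type*} [MeasurableSpace Ω] [MeasurableSpace Ω']
    (μ : Measure Ω) [IsProbabilityMeasure μ]
    (μ' : Measure Ω') [IsProbabilityMeasure μ']
    (X Z : ℕ → Ω → ℝ) (Y : ℕ → Ω' → ℝ)
    (hX : ∀ n, Measurable (X n)) (hZ : ∀ n, Measurable (Z n))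
    (hY : ∀ n, Measurable (Y n))
    (hcont : ∀ n (x : ℝ), μ (X n ⁻¹' {x}) = 0)
    (hst : ∀ n (x : ℝ), μ {ω | X n ω ≤ x} ≤ μ' {ω | Y n ω ≤ x})
    (hZ0 : TendstoInMeasure μ Z atTop (fun _ => (0 : ℝ))) :
    ∃ (Ω'' : Type) (_ : MeasurableSpace Ω'') (μ'' : Measure Ω'')
      (_ : IsProbabilityMeasure μ'') (Y' R : ℕ → Ω'' → ℝ),
      (∀ n, Measurable (Y' n)) ∧ (∀ n, Measurable (R n)) ∧
      (∀ n, Measure.map (Y' n) μ'' = Measure.map (Y n) μ') ∧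
      TendstoInMeasure μ'' R atTop (fun _ => (0 : ℝ)) ∧
      ∀ n (x : ℝ), μ {ω | X n ω + Z n ω ≤ x} ≤ μ'' {ω | Y' n ω + R n ω ≤ x} := by
  classical
  obtain ⟨ε, hεpos, hε0, hεμ⟩ := exists_eps μ Z hZ0
  set A : ℕ → Set Ω := fun n => {ω | ε n ≤ |Z n ω|} with hA
  have hAmeas : ∀ n, MeasurableSet (A n) := fun n =>
    measurableSet_le measurable_const (hZ n).abs
  set δ : ℕ → ℝ := fun n => (μ (A n)).toReal with hδ
  have hδ0 : ∀ n, 0 ≤ δ n := fun n => ENNReal.toReal_nonneg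
  have hδ1 : ∀ n, δ n ≤ 1 := by
    intro n
    have h := prob_le_one (μ := μ) (s := A n)
    have := ENNReal.toReal_mono (by simp) h
    simpa using this
  set ρW : ℕ → Measure ℝ := fun n =>
    Measure.map (fun ω => X n ω + Z n ω) (μ.restrict (A n)ᶜ) with hρW
  set ρK : ℕ → Measure ℝ := fun n =>
    Measure.map (fun ω => X n ω + Z n ω) (μ.restrict (A n)) with hρK
  set ρF : ℕ → Measure ℝ := fun n => Measure.map (Y n) μ' with hρF
  have hXZm : ∀ n, Measurable (fun ω => X n ω + Z n ω) := fun n => (hX n).add (hZ n)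
  haveI hWfin : ∀ n, IsFiniteMeasure (ρW n) := fun n =>
    Measure.isFiniteMeasure_map _ _
  haveI hKfin : ∀ n, IsFiniteMeasure (ρK n) := fun n =>
    Measure.isFiniteMeasure_map _ _
  haveI hFprob : ∀ n, IsProbabilityMeasure (ρF n) := fun n =>
    Measure.isProbabilityMeasure_map (hY n).aemeasurable
  haveI hFfin : ∀ n, IsFiniteMeasure (ρF n) := fun n => haveI := hFprob n; inferInstance
  -- cdf identifications
  have hWapp : ∀ n y, ρW n (Iic y) = μ ({ω | X n ω + Z n ω ≤ y} ∩ (A n)ᶜ) := by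
    intro n y
    rw [hρW, Measure.map_apply (hXZm n) measurableSet_Iic,
      Measure.restrict_apply (by exact measurableSet_le (hXZm n) measurable_const)]
    rfl
  have hKapp : ∀ n y, ρK n (Iic y) = μ ({ω | X n ω + Z n ω ≤ y} ∩ A n) := by
    intro n y
    rw [hρK, Measure.map_apply (hXZm n) measurableSet_Iic,
      Measure.restrict_apply (by exact measurableSet_le (hXZm n) measurable_const)]
    rfl
  have hFapp : ∀ n y, ρF n (Iic y) = μ' {ω' | Y n ω' ≤ y} := by
    intro n y
    rw [hρF, Measure.map_apply (hY n) measurableSet_Iic]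
    rfl
  have hmassW : ∀ n, (ρW n univ).toReal = 1 - δ n := by
    intro n
    rw [hρW, Measure.map_apply (hXZm n) MeasurableSet.univ]
    simp only [preimage_univ, Measure.restrict_apply_univ]
    rw [measure_compl (hAmeas n) (measure_ne_top _ _), measure_univ,
      ENNReal.toReal_sub_of_le (prob_le_one) (by simp)]
    simp [hδ]
  have hmassK : ∀ n, (ρK n univ).toReal = δ n := by
    intro n
    rw [hρK, Measure.map_apply (hXZm n) MeasurableSet.univ]
    simp [hδ]
  have hmassF : ∀ n, (ρF n univ).toReal = 1 := by
    intro n; simp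
  -- definitions
  set Y' : ℕ → ℝ → ℝ := fun n => qF (ρF n) with hY'
  set V : ℕ → ℝ → ℝ := fun n u =>
    if u < 1 - δ n then min (qF (ρW n) u) (qF (ρF n) u)
    else qF (ρK n) (u - (1 - δ n)) with hV
  set R : ℕ → ℝ → ℝ := fun n u => V n u - Y' n u with hR
  have hVmeas : ∀ n, Measurable (V n) := by
    intro n
    refine Measurable.ite ?_ ((measurable_qF _).min (measurable_qF _))
      ((measurable_qF _).comp (measurable_id.sub_const _))
    exact measurableSet_Iio
  set μ'' : Measure ℝ := volume.restrict (Ioo 0 1) with hμ''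
  haveI hμprob : IsProbabilityMeasure μ'' := by
    constructor
    rw [hμ'', Measure.restrict_apply_univ, Real.volume_Ioo]
    norm_num
  -- key quantile comparison : on (0, 1-δ n), qW ≥ qF - ε
  have hqWF : ∀ n u, 0 < u → u < 1 - δ n → qF (ρF n) u - ε n ≤ qF (ρW n) u := by
    intro n u hu0 hu1
    refine le_qF (ρW n) (by rw [hmassW n]; exact hu1) ?_
    intro y hy
    have hchain : u ≤ (ρF n (Iic (y + ε n))).toReal := by
      rw [hWapp n y] at hy
      have hsub : {ω | X n ω + Z n ω ≤ y} ∩ (A n)ᶜ ⊆ {ω | X n ω ≤ y + ε n} := by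
        rintro ω ⟨h1, h2⟩
        simp only [hA, mem_compl_iff, mem_setOf_eq, not_le] at h2
        simp only [mem_setOf_eq] at h1 ⊢
        have : -Z n ω ≤ |Z n ω| := neg_le_abs _
        linarith
      have hle : μ ({ω | X n ω + Z n ω ≤ y} ∩ (A n)ᶜ) ≤ μ' {ω' | Y n ω' ≤ y + ε n} :=
        le_trans (measure_mono hsub) (hst n (y + ε n))
      rw [hFapp n]
      exact le_trans hy (ENNReal.toReal_mono (measure_ne_top _ _) hle)
    have hu1' : u < (ρF n univ).toReal := by
      rw [hmassF n]; have := hδ0 n; linarith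
    have := (qF_le_iff (ρF n) hu0 hu1').mpr hchain
    linarith
  refine ⟨ℝ, inferInstance, μ'', hμprob, Y', R, fun n => measurable_qF _,
    fun n => (hVmeas n).sub (measurable_qF _), ?_, ?_, ?_⟩
  · -- equality of laws
    intro n
    haveI : IsProbabilityMeasure (Measure.map (Y' n) μ'') :=
      Measure.isProbabilityMeasure_map (measurable_qF (ρF n)).aemeasurable
    refine Measure.ext_of_Iic _ _ (fun a => ?_)
    rw [Measure.map_apply (measurable_qF _) measurableSet_Iic,
      hμ'', Measure.restrict_apply ((measurable_qF _) measurableSet_Iic),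
      inter_comm]
    have h1 : qF (ρF n) ⁻¹' Iic a = {u | qF (ρF n) u ≤ a} := rfl
    rw [h1, vol_qF (ρF n) a 1 (le_of_eq (hmassF n).symm)]
    rw [min_eq_left (by rw [← hmassF n]; exact cdf_le_mass _ _)]
    rw [ENNReal.ofReal_toReal (measure_ne_top _ _), hFapp n]
  · -- tendsto in measure
    refine tendstoInMeasure_iff_dist.mpr fun a ha => ?_
    have hub : ∀ᶠ n in atTop, μ'' {u | a ≤ dist (R n u) 0} ≤ ENNReal.ofReal (δ n) := by
      filter_upwards [hε0.eventually_lt_const ha] with n hn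
      have hsub2 : {u | a ≤ dist (R n u) 0} ∩ Ioo 0 1 ⊆ Ico (1 - δ n) 1 := by
        rintro u ⟨hu1, hu2⟩
        simp only [mem_setOf_eq, Real.dist_0_eq_abs] at hu1
        by_contra hcon
        simp only [mem_Ico, not_and_or, not_le, not_lt] at hcon
        have hulow : u < 1 - δ n := by
          rcases hcon with h | h
          · exact h
          · exact absurd hu2.2 (not_lt.mpr h)
        have hVeq : V n u = min (qF (ρW n) u) (qF (ρF n) u) := if_pos hulow
        have h1 : R n u ≤ 0 := by
          rw [hR]; simp only [hVeq, hY']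
          have := min_le_right (qF (ρW n) u) (qF (ρF n) u)
          linarith
        have h2 : -ε n ≤ R n u := by
          rw [hR]; simp only [hVeq, hY']
          have hW := hqWF n u hu2.1 hulow
          have : qF (ρF n) u - ε n ≤ min (qF (ρW n) u) (qF (ρF n) u) := by
            apply le_min hW
            have := (hεpos n); linarith
          linarith
        have : |R n u| ≤ ε n := abs_le.mpr ⟨h2, le_trans h1 (hεpos n).le⟩
        linarith
      calc μ'' {u | a ≤ dist (R n u) 0}
          = volume ({u | a ≤ dist (R n u) 0} ∩ Ioo 0 1) := by
            rw [hμ'', Measure.restrict_apply]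
            exact measurableSet_le measurable_const
              (((hVmeas n).sub (measurable_qF _)).dist measurable_const)
        _ ≤ volume (Ico (1 - δ n) 1) := measure_mono hsub2
        _ = ENNReal.ofReal (δ n) := by rw [Real.volume_Ico]; ring_nf
    have hδtend : Tendsto (fun n => ENNReal.ofReal (δ n)) atTop (nhds 0) := by
      have h1 : Tendsto δ atTop (nhds 0) := by
        have := (ENNReal.tendsto_toReal (a := (0:ENNReal)) (by simp)).comp hεμ
        simpa [hδ, hA, Function.comp_def] using this
      have := ENNReal.tendsto_ofReal h1
      simpa using this
    exact tendsto_of_tendsto_of_tendsto_of_le_of_le' tendsto_const_nhds hδtend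
      (Eventually.of_forall (fun n => zero_le)) hub
  · -- main stochastic order inequality
    intro n x
    set S : Set Ω := {ω | X n ω + Z n ω ≤ x} with hS
    have hSmeas : MeasurableSet S := measurableSet_le (hXZm n) measurable_const
    set J₁ : Set ℝ := Ioo 0 (1 - δ n) ∩ {u | qF (ρW n) u ≤ x} with hJ₁
    set J₂ : Set ℝ := Ioo (1 - δ n) 1 ∩ {u | qF (ρK n) (u - (1 - δ n)) ≤ x} with hJ₂
    have hJ₁meas : MeasurableSet J₁ :=
      measurableSet_Ioo.inter ((measurable_qF _) measurableSet_Iic)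
    have hJ₂meas : MeasurableSet J₂ :=
      measurableSet_Ioo.inter
        (((measurable_qF _).comp (measurable_id.sub_const _)) measurableSet_Iic)
    have hsub : J₁ ∪ J₂ ⊆ {u | Y' n u + R n u ≤ x} := by
      rintro u (⟨hu1, hu2⟩ | ⟨hu1, hu2⟩) <;>
        simp only [mem_setOf_eq, hR, add_sub_cancel]
      · rw [hV]; simp only
        rw [if_pos hu1.2]
        exact le_trans (min_le_left _ _) hu2
      · rw [hV]; simp only
        rw [if_neg (not_lt.mpr hu1.1.le)]
        exact hu2
    have hμ''J₁ : μ'' J₁ = μ (S ∩ (A n)ᶜ) := by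
      have hJsub : J₁ ⊆ Ioo 0 1 := by
        rintro u ⟨hu1, _⟩
        exact ⟨hu1.1, lt_of_lt_of_le hu1.2 (by have := hδ0 n; linarith)⟩
      rw [hμ'', Measure.restrict_apply hJ₁meas, inter_eq_self_of_subset_left hJsub]
      rw [hJ₁, vol_qF (ρW n) x (1 - δ n) (le_of_eq (hmassW n).symm)]
      rw [min_eq_left (by rw [← hmassW n]; exact cdf_le_mass _ _)]
      rw [hWapp n x, ENNReal.ofReal_toReal (measure_ne_top _ _)]
    have hμ''J₂ : μ'' J₂ = μ (S ∩ A n) := by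
      have hJsub : J₂ ⊆ Ioo 0 1 := by
        rintro u ⟨hu1, _⟩
        exact ⟨lt_of_le_of_lt (by have := hδ1 n; linarith) hu1.1, hu1.2⟩
      rw [hμ'', Measure.restrict_apply hJ₂meas, inter_eq_self_of_subset_left hJsub]
      have htrans : J₂ = (fun u => u - (1 - δ n)) ⁻¹'
          (Ioo 0 (δ n) ∩ {s | qF (ρK n) s ≤ x}) := by
        ext u
        simp only [hJ₂, mem_inter_iff, mem_Ioo, mem_setOf_eq, mem_preimage]
        constructor
        · rintro ⟨⟨h1, h2⟩, h3⟩; exact ⟨⟨by linarith, by linarith⟩, h3⟩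
        · rintro ⟨⟨h1, h2⟩, h3⟩; exact ⟨⟨by linarith, by linarith⟩, h3⟩
      rw [htrans]
      have hpres : volume ((fun u : ℝ => u - (1 - δ n)) ⁻¹'
          (Ioo 0 (δ n) ∩ {s | qF (ρK n) s ≤ x}))
          = volume (Ioo 0 (δ n) ∩ {s | qF (ρK n) s ≤ x}) := by
        simp only [sub_eq_add_neg]
        exact measure_preimage_add_right volume _ _
      rw [hpres, vol_qF (ρK n) x (δ n) (le_of_eq (hmassK n).symm)]
      rw [min_eq_left (by rw [← hmassK n]; exact cdf_le_mass _ _)]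
      rw [hKapp n x, ENNReal.ofReal_toReal (measure_ne_top _ _)]
    have hdisj : Disjoint J₁ J₂ := by
      rw [Set.disjoint_left]
      rintro u ⟨hu1, _⟩ ⟨hu2, _⟩
      exact absurd hu1.2 (not_lt.mpr hu2.1.le)
    calc μ S = μ (S ∩ A n) + μ (S ∩ (A n)ᶜ) := by
          rw [← measure_inter_add_diff S (hAmeas n)]; rw [diff_eq]
      _ = μ'' J₂ + μ'' J₁ := by rw [hμ''J₁, hμ''J₂]
      _ = μ'' (J₁ ∪ J₂) := by
          rw [measure_union hdisj hJ₂meas, add_comm]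
      _ ≤ μ'' {u | Y' n u + R n u ≤ x} := measure_mono hsub
end
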